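/- Let n be odd composite with n - 1 = d·2^s (d odd), and let k be a nonzero integer. Then |Σ_{j=0}^{s-1} Σ_{w: w^{2^j d} ≡ -1 mod n, 0 ≤ w < n} e(kw/n)| ≤ s·(|k|·√n + σ(|k|)) ≤ (log₂ n)·(|k|·√n + σ(|k|)), hence this sum is O_k(√n · log n). -/

import Mathlib

set_option linter.unusedSectionVars false
set_option maxHeartbeats 1000000

open Finset ArithmeticFunction

noncomputable def e (x : ℝ) : ℂ := Complex.exp (2 * Real.pi * Complex.I * x)

lemma e_add_int (x : ℝ) (j : ℤ) : e (x + j) = e x := by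
  unfold e
  push_cast
  rw [mul_add, Complex.exp_add]
  rw [show 2 * ↑Real.pi * Complex.I * (j:ℂ) = (j:ℂ) * (2 * ↑Real.pi * Complex.I) by ring]
  rw [Complex.exp_int_mul_two_pi_mul_I]
  ring

lemma e_add (x y : ℝ) : e (x + y) = e x * e y := by
  unfold e; push_cast; rw [mul_add, Complex.exp_add]

lemma e_norm (x : ℝ) : ‖e x‖ = 1 := by
  unfold e
  rw [show 2 * ↑Real.pi * Complex.I * (x:ℂ) = ((2 * Real.pi * x : ℝ):ℂ) * Complex.I by push_cast; ring]
  exact Complex.norm_exp_ofReal_mul_I _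

lemma e_ne_one {x : ℝ} (h0 : 0 < x) (h1 : x < 1) : e x ≠ 1 := by
  unfold e
  intro h
  rw [Complex.exp_eq_one_iff] at h
  obtain ⟨m, hm⟩ := h
  rw [show (m:ℂ) * (2 * ↑Real.pi * Complex.I) = 2 * ↑Real.pi * Complex.I * (m:ℂ) by ring] at hm
  have h2 : (2 * ↑Real.pi * Complex.I : ℂ) ≠ 0 := by
    simp [Complex.I_ne_zero, Real.pi_ne_zero]
  have := mul_left_cancel₀ h2 hm
  have hx : x = (m : ℝ) := by exact_mod_cast this
  rw [hx] at h0 h1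
  have : (0:ℤ) < m := by exact_mod_cast h0
  have : m < 1 := by exact_mod_cast h1
  omega


section PsiLemmas

variable {n : ℕ} [NeZero n]

noncomputable def psi (n : ℕ) (x : ZMod n) : ℂ := e ((x.val : ℝ) / n)

lemma psi_add (x y : ZMod n) : psi n (x + y) = psi n x * psi n y := by
  have hn : (0:ℝ) < n := by exact_mod_cast Nat.pos_of_ne_zero (NeZero.ne n)
  unfold psi
  rw [← e_add, ← add_div]
  have h2 : x.val + y.val = (x + y).val + n * ((x.val + y.val) / n) := by
    rw [ZMod.val_add]; exact (Nat.mod_add_div _ _).symm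
  have h3 : ((x.val:ℝ) + (y.val:ℝ)) = ((x+y).val : ℝ) + (n:ℝ) * ((((x.val + y.val) / n : ℕ):ℤ):ℝ) := by
    exact_mod_cast h2
  rw [h3, add_div, mul_div_cancel_left₀ _ hn.ne', e_add_int]

lemma psi_zero : psi n 0 = 1 := by
  unfold psi
  simp [ZMod.val_zero, e]

lemma psi_ne_zero (x : ZMod n) : psi n x ≠ 0 := by
  intro h
  have := e_norm ((x.val : ℝ)/n)
  rw [show e ((x.val:ℝ)/n) = psi n x from rfl, h] at this
  simp at this

lemma psi_conj (x : ZMod n) : (starRingEnd ℂ) (psi n x) = psi n (-x) := by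
  have h1 : psi n x * psi n (-x) = 1 := by rw [← psi_add]; simp [psi_zero]
  have h2 : psi n x * (starRingEnd ℂ) (psi n x) = 1 := by
    rw [Complex.mul_conj]
    have := e_norm ((x.val : ℝ)/n)
    rw [show e ((x.val:ℝ)/n) = psi n x from rfl] at this
    rw [Complex.normSq_eq_norm_sq]
    simp [this]
  exact mul_left_cancel₀ (psi_ne_zero x) (h2.trans h1.symm)

lemma psi_orth (hn : 1 < n) (c : ZMod n) :
    ∑ a : ZMod n, psi n (a * c) = if c = 0 then (n : ℂ) else 0 := by
  split_ifs with hc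
  · subst hc; simp [psi_zero, Finset.card_univ]
  · have key : psi n c * ∑ a : ZMod n, psi n (a * c) = ∑ a : ZMod n, psi n (a * c) := by
      rw [Finset.mul_sum]
      rw [← Equiv.sum_comp (Equiv.addLeft (1 : ZMod n)) (fun a => psi n (a * c))]
      apply Finset.sum_congr rfl
      intro a _
      rw [← psi_add]
      simp [add_mul]
    have hpc : psi n c ≠ 1 := by
      unfold psi
      have hv : 0 < c.val := Nat.pos_of_ne_zero (fun h => hc ((ZMod.val_eq_zero c).mp h))
      have hv2 : c.val < n := ZMod.val_lt c
      apply e_ne_one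
      · positivity
      · rw [div_lt_one (by exact_mod_cast Nat.lt_of_lt_of_le Nat.one_pos hn.le)]
        exact_mod_cast hv2
    have := sub_eq_zero.mpr key
    rw [show psi n c * ∑ a : ZMod n, psi n (a*c) - ∑ a : ZMod n, psi n (a*c)
        = (psi n c - 1) * ∑ a : ZMod n, psi n (a*c) by ring] at this
    rcases mul_eq_zero.mp this with h | h
    · exact absurd (sub_eq_zero.mp h) hpc
    · exact h


lemma parseval (hn : 1 < n) (T : Finset (ZMod n)) :
    ∑ a : ZMod n, ‖∑ w ∈ T, psi n (a * w)‖ ^ 2 = (n : ℝ) * T.card := by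
  have hc : ∑ a : ZMod n, (∑ w ∈ T, psi n (a * w)) * (starRingEnd ℂ) (∑ w ∈ T, psi n (a * w))
      = ((n : ℂ) * T.card) := by
    have : ∀ a : ZMod n, (∑ w ∈ T, psi n (a * w)) * (starRingEnd ℂ) (∑ w ∈ T, psi n (a * w))
        = ∑ w ∈ T, ∑ w' ∈ T, psi n (a * (w - w')) := by
      intro a
      rw [map_sum, Finset.sum_mul_sum]
      apply Finset.sum_congr rfl; intro w _
      apply Finset.sum_congr rfl; intro w' _
      rw [psi_conj, ← psi_add, mul_sub]
      ring_nf
    rw [Finset.sum_congr rfl (fun a _ => this a), Finset.sum_comm]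
    have step : ∀ w ∈ T, (∑ a : ZMod n, ∑ w' ∈ T, psi n (a * (w - w'))) = (n : ℂ) := by
      intro w hw
      rw [Finset.sum_comm]
      have : ∀ w' ∈ T, (∑ a : ZMod n, psi n (a * (w - w'))) = if w' = w then (n:ℂ) else 0 := by
        intro w' _
        rw [psi_orth hn (w - w')]
        congr 1
        simp [sub_eq_zero, eq_comm]
      rw [Finset.sum_congr rfl this, Finset.sum_ite_eq' T w (fun _ => (n:ℂ)), if_pos hw]
    rw [Finset.sum_congr rfl step, Finset.sum_const, nsmul_eq_mul, mul_comm]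
  have habs : ∀ z : ℂ, ((‖z‖^2 : ℝ) : ℂ) = z * (starRingEnd ℂ) z := by
    intro z
    rw [Complex.mul_conj]
    norm_cast
    simp [Complex.normSq_eq_norm_sq]
  apply Complex.ofReal_injective
  rw [Complex.ofReal_sum, Finset.sum_congr rfl (fun (a : ZMod n) _ => habs _), hc]
  push_cast
  ring


lemma ker_bound (k : ℤ) (b : ZMod n) :
    (Finset.univ.filter (fun x : ZMod n => (k : ZMod n) * x = b)).card ≤ n.gcd k.natAbs := by
  set g := n.gcd k.natAbs with hgdef
  have hnpos : 0 < n := Nat.pos_of_ne_zero (NeZero.ne n)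
  have hgpos : 0 < g := Nat.gcd_pos_of_pos_left _ hnpos
  have hgdvd : g ∣ n := Nat.gcd_dvd_left _ _
  set n' := n / g with hn'def
  have hn'g : n' * g = n := Nat.div_mul_cancel hgdvd
  have hn'pos : 0 < n' := by
    rcases Nat.eq_zero_or_pos n' with h | h
    · rw [h, zero_mul] at hn'g; omega
    · exact h
  -- kernel divisibility
  have hker : ∀ y : ZMod n, (k : ZMod n) * y = 0 → n' ∣ y.val := by
    intro y hy
    have hy' : ((k * (y.val : ℤ) : ℤ) : ZMod n) = 0 := by
      push_cast
      rw [show ((y.val : ℕ) : ZMod n) = y by simp [ZMod.natCast_val, ZMod.cast_id]]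
      exact hy
    have hdvd : (n : ℤ) ∣ k * (y.val : ℤ) := (ZMod.intCast_zmod_eq_zero_iff_dvd _ _).mp hy'
    have hdvdn : n ∣ k.natAbs * y.val := by
      have h2 := Int.natAbs_dvd_natAbs.mpr hdvd
      rwa [Int.natAbs_mul, Int.natAbs_natCast, Int.natAbs_natCast] at h2
    -- cancel g
    obtain ⟨t, ht⟩ := hdvdn
    have hcop : Nat.Coprime n' (k.natAbs / g) := Nat.coprime_div_gcd_div_gcd hgpos
    have hkg : g ∣ k.natAbs := Nat.gcd_dvd_right _ _
    have ht' : (k.natAbs / g) * y.val = n' * t := by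
      have h1 : g * ((k.natAbs / g) * y.val) = g * (n' * t) := by
        rw [← mul_assoc, Nat.mul_div_cancel' hkg, ht, ← hn'g]; ring
      exact Nat.eq_of_mul_eq_mul_left hgpos h1
    have : n' ∣ (k.natAbs / g) * y.val := ⟨t, ht'⟩
    exact (Nat.Coprime.dvd_of_dvd_mul_left hcop this)
  -- now injection into range g
  rcases (Finset.univ.filter (fun x : ZMod n => (k : ZMod n) * x = b)).eq_empty_or_nonempty with h | h
  · rw [h]; simp
  · obtain ⟨x0, hx0⟩ := h
    rw [Finset.mem_filter] at hx0
    have := Finset.card_le_card_of_injOn (fun x => (x - x0).val / n')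
      (s := (Finset.univ.filter (fun x : ZMod n => (k : ZMod n) * x = b))) (t := Finset.range g)
      ?_ ?_
    · simpa using this
    · intro x hx
      rw [Finset.mem_coe, Finset.mem_filter] at hx
      rw [Finset.mem_coe, Finset.mem_range]
      have : (x - x0).val < n := ZMod.val_lt _
      rw [Nat.div_lt_iff_lt_mul hn'pos]
      have hgn : g * n' = n := by rw [mul_comm]; exact hn'g
      omega
    · intro x hx y hy hxy
      rw [Finset.mem_coe, Finset.mem_filter] at hx hy
      have hdx : n' ∣ (x - x0).val := hker _ (by rw [mul_sub, hx.2, hx0.2, sub_self])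
      have hdy : n' ∣ (y - x0).val := hker _ (by rw [mul_sub, hy.2, hx0.2, sub_self])
      have hvx : (x - x0).val = n' * ((x - x0).val / n') := (Nat.mul_div_cancel' hdx).symm
      have hvy : (y - x0).val = n' * ((y - x0).val / n') := (Nat.mul_div_cancel' hdy).symm
      have hxy' : (x - x0).val / n' = (y - x0).val / n' := hxy
      have hv : (x - x0).val = (y - x0).val := by rw [hvx, hvy, hxy']
      have h5 : x - x0 = y - x0 := ZMod.val_injective n hv
      exact sub_left_injective h5

lemma coset_bound (hn : 1 < n) (m : ℕ) (hm : 0 < m) (k : ℤ) (hk : k ≠ 0) :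
    ‖∑ w ∈ Finset.univ.filter (fun w : ZMod n => w ^ m = -1), psi n ((k : ZMod n) * w)‖
      ≤ (k.natAbs : ℝ) * Real.sqrt n := by
  classical
  obtain ⟨m', rfl⟩ : ∃ m', m = m' + 1 := ⟨m - 1, by omega⟩
  set M := m' + 1 with hM
  set T : Finset (ZMod n) := Finset.univ.filter (fun w : ZMod n => w ^ M = -1) with hT
  set H : Finset (ZMod n) := Finset.univ.filter (fun h : ZMod n => h ^ M = 1) with hH
  set K : ZMod n := (k : ZMod n) with hK
  set S : ZMod n → ℂ := fun a => ∑ w ∈ T, psi n (a * w) with hS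
  set g : ℕ := n.gcd k.natAbs with hg
  -- invariance on the image
  have himg : ∀ h ∈ H, S (K * h) = S K := by
    intro h hh
    rw [Finset.mem_filter] at hh
    have hinv : h ^ m' * h = 1 := by rw [← pow_succ]; exact hh.2
    apply Finset.sum_nbij' (i := fun w => h * w) (j := fun w => h ^ m' * w)
    · intro a ha
      rw [Finset.mem_filter] at ha ⊢
      refine ⟨Finset.mem_univ _, ?_⟩
      rw [mul_pow, hh.2, one_mul, ha.2]
    · intro a ha
      rw [Finset.mem_filter] at ha ⊢
      refine ⟨Finset.mem_univ _, ?_⟩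
      rw [mul_pow, ← pow_mul, mul_comm m' M, pow_mul, hh.2, one_pow, one_mul, ha.2]
    · intro a _
      rw [← mul_assoc, hinv, one_mul]
    · intro a _
      rw [← mul_assoc, mul_comm h (h ^ m'), hinv, one_mul]
    · intro a _
      rw [mul_assoc]
  -- T.card ≤ H.card
  have hTH : T.card ≤ H.card := by
    rcases T.eq_empty_or_nonempty with h | h
    · simp [h]
    · obtain ⟨c, hc⟩ := h
      rw [hT, Finset.mem_filter] at hc
      apply Finset.card_le_card_of_injOn (fun w => c ^ (2 * m' + 1) * w)
      · intro w hw
        rw [Finset.mem_coe, Finset.mem_filter] at hw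
        rw [Finset.mem_coe, hH, Finset.mem_filter]
        refine ⟨Finset.mem_univ _, ?_⟩
        rw [mul_pow, ← pow_mul, hw.2]
        have : c ^ ((2 * m' + 1) * M) * c ^ M = 1 := by
          rw [← pow_add]
          have : (2 * m' + 1) * M + M = (M * 2) * M := by simp only [hM]; ring
          rw [this, pow_mul, pow_mul, hc.2]
          simp
        rw [show c ^ M = -1 from hc.2] at this
        have h9 : c ^ ((2 * m' + 1) * M) = -1 := by
          have := congrArg (fun z => z * (-1)) this
          simpa using this
        rw [h9]
        simp
      · intro x hx y hy hxy
        have hcc : c * c ^ (2 * m' + 1) = 1 := by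
          rw [← pow_succ']
          have : 2 * m' + 1 + 1 = M * 2 := by omega
          rw [this, pow_mul, hc.2]
          simp
        have := congrArg (fun z => c * z) hxy
        simp only at this
        rwa [← mul_assoc, ← mul_assoc, hcc, one_mul, one_mul] at this
  -- H nonempty
  have hHpos : 0 < H.card := Finset.card_pos.mpr ⟨1, by rw [hH, Finset.mem_filter]; simp⟩
  -- fiber bound
  have hfiber : H.card ≤ g * (H.image (fun h => K * h)).card := by
    apply Finset.card_le_mul_card_image
    intro b _
    calc (H.filter (fun h => K * h = b)).card
        ≤ (Finset.univ.filter (fun x : ZMod n => K * x = b)).card := by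
          apply Finset.card_le_card
          intro x hx
          rw [Finset.mem_filter] at hx ⊢
          exact ⟨Finset.mem_univ _, hx.2⟩
      _ ≤ g := ker_bound k b
  -- sum over image
  have hsum_img : ∑ a ∈ H.image (fun h => K * h), ‖S a‖ ^ 2
      = ((H.image (fun h => K * h)).card : ℝ) * ‖S K‖ ^ 2 := by
    rw [Finset.sum_congr rfl (fun a ha => ?_), Finset.sum_const, nsmul_eq_mul]
    obtain ⟨h, hh, rfl⟩ := Finset.mem_image.mp ha
    rw [himg h hh]
  have hsub : ∑ a ∈ H.image (fun h => K * h), ‖S a‖ ^ 2 ≤ ∑ a : ZMod n, ‖S a‖ ^ 2 :=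
    Finset.sum_le_sum_of_subset_of_nonneg (Finset.subset_univ _)
      (fun a _ _ => by positivity)
  have hpars : ∑ a : ZMod n, ‖S a‖ ^ 2 = (n : ℝ) * T.card := parseval hn T
  -- combine
  have hB2 : ‖S K‖ ^ 2 ≤ (g : ℝ) * n := by
    have h1 : (H.card : ℝ) * ‖S K‖ ^ 2 ≤ (g : ℝ) * ((n : ℝ) * H.card) := by
      calc (H.card : ℝ) * ‖S K‖ ^ 2
          ≤ (g : ℝ) * ((H.image (fun h => K * h)).card : ℝ) * ‖S K‖ ^ 2 := by
            have : (H.card : ℝ) ≤ (g : ℝ) * ((H.image (fun h => K * h)).card : ℝ) := by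
              exact_mod_cast hfiber
            have hB : (0:ℝ) ≤ ‖S K‖ ^ 2 := by positivity
            nlinarith
        _ = (g : ℝ) * (∑ a ∈ H.image (fun h => K * h), ‖S a‖ ^ 2) := by
            rw [hsum_img]; ring
        _ ≤ (g : ℝ) * ((n : ℝ) * T.card) := by
            apply mul_le_mul_of_nonneg_left _ (by positivity)
            rw [← hpars]; exact hsub
        _ ≤ (g : ℝ) * ((n : ℝ) * H.card) := by
            apply mul_le_mul_of_nonneg_left _ (by positivity)
            apply mul_le_mul_of_nonneg_left _ (by positivity)
            exact_mod_cast hTH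
    have hHr : (0:ℝ) < (H.card : ℝ) := by exact_mod_cast hHpos
    nlinarith
  -- conclude
  have hfin : ‖S K‖ ≤ Real.sqrt ((g : ℝ) * n) := by
    rw [Real.le_sqrt (by positivity) (by positivity)]
    exact hB2
  have hka : (1 : ℝ) ≤ (k.natAbs : ℝ) := by
    have : 1 ≤ k.natAbs := by omega
    exact_mod_cast this
  have hgk : (g : ℝ) ≤ (k.natAbs : ℝ) := by
    have : g ≤ k.natAbs := Nat.le_of_dvd (by omega) (Nat.gcd_dvd_right _ _)
    exact_mod_cast this
  calc ‖S K‖ ≤ Real.sqrt ((g : ℝ) * n) := hfin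
    _ = Real.sqrt (g : ℝ) * Real.sqrt n := Real.sqrt_mul (by positivity) _
    _ ≤ (k.natAbs : ℝ) * Real.sqrt n := by
        apply mul_le_mul_of_nonneg_right _ (Real.sqrt_nonneg _)
        calc Real.sqrt (g : ℝ) ≤ Real.sqrt ((k.natAbs : ℝ)) := Real.sqrt_le_sqrt hgk
          _ ≤ (k.natAbs : ℝ) := by
              have h1 : (k.natAbs:ℝ) ≤ (k.natAbs:ℝ)^2 := by nlinarith
              calc Real.sqrt ((k.natAbs:ℝ)) ≤ Real.sqrt ((k.natAbs:ℝ)^2) :=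
                    Real.sqrt_le_sqrt h1
                _ = (k.natAbs:ℝ) := Real.sqrt_sq (by positivity)


end PsiLemmas

lemma bridge {n : ℕ} [NeZero n] (hn : 1 < n) (m : ℕ) (k : ℤ) :
    ∑ w ∈ (Finset.range n).filter (fun w : ℕ => ((w : ZMod n)) ^ m = -1), e ((k : ℝ) * w / n)
      = ∑ w ∈ Finset.univ.filter (fun w : ZMod n => w ^ m = -1), psi n ((k : ZMod n) * w) := by
  apply Finset.sum_nbij' (i := fun w : ℕ => (w : ZMod n)) (j := fun x : ZMod n => x.val)
  · intro a ha
    rw [Finset.mem_filter] at ha ⊢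
    exact ⟨Finset.mem_univ _, ha.2⟩
  · intro x hx
    rw [Finset.mem_filter] at hx ⊢
    constructor
    · exact Finset.mem_range.mpr (ZMod.val_lt x)
    · rw [show ((x.val : ℕ) : ZMod n) = x by simp [ZMod.natCast_val, ZMod.cast_id]]
      exact hx.2
  · intro a ha
    rw [Finset.mem_filter, Finset.mem_range] at ha
    exact ZMod.val_cast_of_lt ha.1
  · intro x hx
    simp [ZMod.natCast_val, ZMod.cast_id]
  · intro w hw
    rw [Finset.mem_filter, Finset.mem_range] at hw
    set x : ZMod n := (k : ZMod n) * (w : ZMod n) with hx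
    have h1 : ((k * w - (x.val : ℤ) : ℤ) : ZMod n) = 0 := by
      push_cast
      rw [show ((x.val : ℕ) : ZMod n) = x by simp [ZMod.natCast_val, ZMod.cast_id]]
      rw [hx]
      push_cast
      ring
    obtain ⟨t, ht⟩ := (ZMod.intCast_zmod_eq_zero_iff_dvd _ _).mp h1
    have hreal : (k : ℝ) * w / n = (x.val : ℝ) / n + (t : ℝ) := by
      have hn0 : (n:ℝ) ≠ 0 := by positivity
      have h2 : (k : ℝ) * w = (x.val : ℝ) + (n : ℝ) * t := by
        have : (k * w : ℤ) = (x.val : ℤ) + (n : ℤ) * t := by omega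
        exact_mod_cast congrArg (fun z : ℤ => (z : ℝ)) this
      rw [h2, add_div, mul_div_cancel_left₀ _ hn0]
    rw [hreal, e_add_int]
    rfl

/-- estimate of S₃, the exponential sum over solutions of
w^(2^j d) ≡ -1 (mod n), summed over j < s. -/
theorem S3_bound (n d s : ℕ) (hodd : Odd n) (hcomp : ¬ n.Prime) (hn : 1 < n)
    (hd : Odd d) (hds : n - 1 = d * 2 ^ s) (k : ℤ) (hk : k ≠ 0) :
    ‖∑ j ∈ Finset.range s, ∑ w ∈ (Finset.range n).filter
        (fun w : ℕ => ((w : ZMod n)) ^ (2 ^ j * d) = -1), e ((k : ℝ) * w / n)‖ ≤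
      (s : ℝ) * ((k.natAbs : ℝ) * Real.sqrt n + (sigma 1 k.natAbs : ℝ)) ∧
    (s : ℝ) * ((k.natAbs : ℝ) * Real.sqrt n + (sigma 1 k.natAbs : ℝ)) ≤
      Real.logb 2 n * ((k.natAbs : ℝ) * Real.sqrt n + (sigma 1 k.natAbs : ℝ)) := by
  haveI : NeZero n := ⟨by omega⟩
  have hd1 : 0 < d := by
    rcases hd with ⟨t, ht⟩; omega
  have hfac : (0:ℝ) ≤ (k.natAbs : ℝ) * Real.sqrt n + (sigma 1 k.natAbs : ℝ) := by
    have h1 : (0:ℝ) ≤ (k.natAbs : ℝ) * Real.sqrt n := by positivity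
    have h2 : (0:ℝ) ≤ (sigma 1 k.natAbs : ℝ) := by positivity
    linarith
  refine ⟨?_, ?_⟩
  · refine le_trans (norm_sum_le _ _) ?_
    refine le_trans (Finset.sum_le_sum (g := fun _ =>
        ((k.natAbs : ℝ) * Real.sqrt n + (sigma 1 k.natAbs : ℝ)))
        (fun j (_ : j ∈ Finset.range s) => ?_)) ?_
    · rw [bridge hn (2 ^ j * d) k]
      have h2 : (0:ℝ) ≤ (sigma 1 k.natAbs : ℝ) := by positivity
      have := coset_bound (n := n) hn (2 ^ j * d) (by positivity) k hk
      exact le_trans this (le_add_of_nonneg_right h2)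
    · rw [Finset.sum_const, Finset.card_range, nsmul_eq_mul]
  · apply mul_le_mul_of_nonneg_right _ hfac
    have h2s : (2:ℝ) ^ s ≤ (n : ℝ) := by
      have h1 : 2 ^ s ≤ n - 1 := by
        calc 2 ^ s ≤ d * 2 ^ s := Nat.le_mul_of_pos_left _ hd1
          _ = n - 1 := hds.symm
      have : (2:ℕ) ^ s ≤ n := by omega
      exact_mod_cast this
    have hlog : Real.logb 2 ((2:ℝ) ^ s) = (s : ℝ) := by
      rw [Real.logb_pow, Real.logb_self_eq_one (by norm_num)]
      ring
    rw [← hlog]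
    apply Real.logb_le_logb_of_le (by norm_num) (by positivity) h2s
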